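/- Let h₁(z,w) = [[zw + w, z − 1, 0], [z − 1, z w⁻¹ + w⁻¹ + 1, 1], [0, 1, z⁻¹]], let I = [[0, 1₃], [1₃, 0]] ∈ M_6(ℂ), and for each of the four points Γ ∈ {(1,1), (−1,1), (1,−1), (−1,−1)} set A_Γ = [[0, h₁(Γ)], [h₁(Γ), 0]] ∈ M_6(ℂ) in 3×3 block form (each h₁(Γ) is real symmetric, so A_Γ is Hermitian). Let n₋(Γ) be the dimension of the intersection of the sum of the eigenspaces of A_Γ for its negative eigenvalues with the (−1)-eigenspace of I. Then n₋(1,1) = 3 and n₋(−1,1) = n₋(1,−1) = n₋(−1,−1) = 1, so that n₋(1,1) + n₋(−1,1) + n₋(1,−1) + n₋(−1,−1) = 6; in particular the symmetry-based indicator μ_{2D}(H₁) = −Σ_Γ n₋(Γ) mod 4 equals 2. -/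

import Mathlib

open Complex Matrix

/-- The set of negative (real) eigenvalues of a `6×6` complex matrix. -/
def negEigenvalues (A : Matrix (Fin 3 ⊕ Fin 3) (Fin 3 ⊕ Fin 3) ℂ) : Set ℂ :=
  {μ : ℂ | μ ∈ spectrum ℂ A ∧ ∃ x : ℝ, (x : ℂ) = μ ∧ x < 0}

/-- The sum of the eigenspaces of `A` for its negative eigenvalues, as a subspace of `ℂ⁶`. -/
noncomputable def negSpace (A : Matrix (Fin 3 ⊕ Fin 3) (Fin 3 ⊕ Fin 3) ℂ) :
    Submodule ℂ ((Fin 3 ⊕ Fin 3) → ℂ) :=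
  ⨆ μ ∈ negEigenvalues A, Module.End.eigenspace (Matrix.toLin' A) μ

/-- The inversion symmetry operator `I = [[0, 1₃], [1₃, 0]]`. -/
noncomputable def inversionOp : Matrix (Fin 3 ⊕ Fin 3) (Fin 3 ⊕ Fin 3) ℂ :=
  Matrix.fromBlocks 0 1 1 0

/-- The number `n₋(Γ)` of occupied states of odd parity: the dimension of the intersection of
the sum of the negative eigenspaces of `A` with the `(−1)`-eigenspace of the inversion
operator. -/
noncomputable def nMinus (A : Matrix (Fin 3 ⊕ Fin 3) (Fin 3 ⊕ Fin 3) ℂ) : ℕ :=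
  Module.finrank ℂ
    ↥(negSpace A ⊓ Module.End.eigenspace (Matrix.toLin' inversionOp) (-1))

/-- The off-diagonal block `h₁(z,w)` of the deformed two-dimensional model Hamiltonian. -/
noncomputable def hOne (z w : ℂ) : Matrix (Fin 3) (Fin 3) ℂ :=
  !![z * w + w, z - 1, 0;
     z - 1, z * w⁻¹ + w⁻¹ + 1, 1;
     0, 1, z⁻¹]

/-- The deformed Hamiltonian `H₁` at a fixed point `Γ = (z,w)`, in block form. -/
noncomputable def AFixed (z w : ℂ) : Matrix (Fin 3 ⊕ Fin 3) (Fin 3 ⊕ Fin 3) ℂ :=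
  Matrix.fromBlocks 0 (hOne z w) (hOne z w) 0

namespace IndicatorAux

abbrev N6 := Fin 3 ⊕ Fin 3

/-- Coordinate subspace supported on `s`. -/
noncomputable def stdSub (s : Set N6) : Submodule ℂ (N6 → ℂ) where
  carrier := {x | ∀ i ∉ s, x i = 0}
  add_mem' := fun {a b} ha hb i hi => by simp [ha i hi, hb i hi]
  zero_mem' := fun i _ => rfl
  smul_mem' := fun c a ha i hi => by simp [ha i hi]

lemma mem_stdSub {s : Set N6} {x : N6 → ℂ} : x ∈ stdSub s ↔ ∀ i ∉ s, x i = 0 := Iff.rfl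

lemma stdSub_mono {s t : Set N6} (h : s ⊆ t) : stdSub s ≤ stdSub t :=
  fun x hx i hi => hx i fun hs => hi (h hs)

lemma stdSub_inf (s t : Set N6) : stdSub s ⊓ stdSub t = stdSub (s ∩ t) := by
  ext x
  simp only [Submodule.mem_inf, mem_stdSub]
  constructor
  · rintro ⟨h1, h2⟩ i hi
    by_cases hs : i ∈ s
    · exact h2 i fun ht => hi ⟨hs, ht⟩
    · exact h1 i hs
  · exact fun h => ⟨fun i hi => h i fun hm => hi hm.1, fun i hi => h i fun hm => hi hm.2⟩

lemma eigenspace_diag (d : N6 → ℂ) (μ : ℂ) :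
    Module.End.eigenspace (Matrix.toLin' (Matrix.diagonal d)) μ = stdSub {i | d i = μ} := by
  ext x
  rw [Module.End.mem_eigenspace_iff, mem_stdSub]
  constructor
  · intro hx i hi
    have h1 : d i * x i = μ * x i := by
      have := congrFun hx i
      simpa [Matrix.toLin'_apply, Matrix.mulVec_diagonal] using this
    have h2 : (d i - μ) * x i = 0 := by linear_combination h1
    rcases mul_eq_zero.1 h2 with h | h
    · exact absurd (sub_eq_zero.1 h) hi
    · exact h
  · intro hx
    funext i
    simp only [Matrix.toLin'_apply, Matrix.mulVec_diagonal, Pi.smul_apply, smul_eq_mul]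
    by_cases h : d i = μ
    · rw [h]
    · rw [hx i h, mul_zero, mul_zero]

lemma eigenspace_conj {A P Q B : Matrix N6 N6 ℂ} (hPQ : P * Q = 1) (hQP : Q * P = 1)
    (hA : A * P = P * B) (μ : ℂ) :
    Module.End.eigenspace (Matrix.toLin' A) μ
      = (Module.End.eigenspace (Matrix.toLin' B) μ).map (Matrix.toLin' P) := by
  have hB : B = Q * (A * P) := by rw [hA, ← mul_assoc, hQP, one_mul]
  have hBQ : B * Q = Q * A := by
    rw [hB, mul_assoc, mul_assoc, hPQ, mul_one]
  ext x
  simp only [Submodule.mem_map, Module.End.mem_eigenspace_iff, Matrix.toLin'_apply]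
  constructor
  · intro hx
    refine ⟨Q *ᵥ x, ?_, ?_⟩
    · rw [Matrix.mulVec_mulVec, hBQ, ← Matrix.mulVec_mulVec, hx, Matrix.mulVec_smul]
    · rw [Matrix.mulVec_mulVec, hPQ, Matrix.one_mulVec]
  · rintro ⟨y, hy, rfl⟩
    rw [Matrix.mulVec_mulVec, hA, ← Matrix.mulVec_mulVec, hy, Matrix.mulVec_smul]

lemma spectrum_eq {A P Q : Matrix N6 N6 ℂ} {d : N6 → ℂ} (hPQ : P * Q = 1) (hQP : Q * P = 1)
    (hA : A * P = P * Matrix.diagonal d) :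
    spectrum ℂ A = Set.range d := by
  have hAeq : A = P * Matrix.diagonal d * Q := by
    rw [← hA, mul_assoc, hPQ, mul_one]
  have hPd : P.det * Q.det = 1 := by rw [← Matrix.det_mul, hPQ, Matrix.det_one]
  have hP0 : P.det ≠ 0 := left_ne_zero_of_mul_eq_one hPd
  have hQ0 : Q.det ≠ 0 := right_ne_zero_of_mul_eq_one hPd
  ext μ
  rw [spectrum.mem_iff]
  have key : (algebraMap ℂ (Matrix N6 N6 ℂ)) μ - A
      = P * Matrix.diagonal (fun i => μ - d i) * Q := by
    have hd : Matrix.diagonal (fun i : N6 => μ - d i)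
        = μ • (1 : Matrix N6 N6 ℂ) - Matrix.diagonal d := by
      ext i j
      by_cases h : i = j <;>
        simp [Matrix.diagonal_apply, Matrix.one_apply, Matrix.sub_apply, Matrix.smul_apply, h]
    rw [hd, Algebra.algebraMap_eq_smul_one, hAeq, mul_sub, sub_mul,
      mul_smul_comm, mul_one, smul_mul_assoc, hPQ]
  rw [key, Matrix.isUnit_iff_isUnit_det, Matrix.det_mul, Matrix.det_mul,
    Matrix.det_diagonal, isUnit_iff_ne_zero, not_not]
  constructor
  · intro h
    rcases mul_eq_zero.1 h with h | h
    · rcases mul_eq_zero.1 h with h | h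
      · exact absurd h hP0
      · obtain ⟨i, -, hi⟩ := Finset.prod_eq_zero_iff.1 h
        exact ⟨i, (sub_eq_zero.1 hi).symm⟩
    · exact absurd h hQ0
  · rintro ⟨i, rfl⟩
    apply mul_eq_zero_of_left
    apply mul_eq_zero_of_right
    exact Finset.prod_eq_zero (Finset.mem_univ i) (by rw [sub_self])

lemma iSup_stdSub (d : N6 → ℂ) (M : Set ℂ) :
    (⨆ μ ∈ M, stdSub {i | d i = μ}) = stdSub {i | d i ∈ M} := by
  apply le_antisymm
  · refine iSup₂_le fun μ hμ => stdSub_mono fun i hi => ?_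
    simp only [Set.mem_setOf_eq] at hi ⊢
    rw [hi]; exact hμ
  · intro x hx
    have hxe : x = ∑ i, Pi.single i (x i) := (Finset.univ_sum_single x).symm
    rw [hxe]
    refine Submodule.sum_mem _ fun i _ => ?_
    by_cases h : x i = 0
    · simp [h]
    · have hdi : d i ∈ M := by
        by_contra hdi
        exact h (hx i hdi)
      refine Submodule.mem_iSup_of_mem (d i) (Submodule.mem_iSup_of_mem hdi ?_)
      intro j hj
      have hji : j ≠ i := fun e => hj (by simp only [Set.mem_setOf_eq, e])
      simp [Pi.single_eq_of_ne hji]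

end IndicatorAux

namespace IndicatorAux

lemma nMinus_eq {A P Q : Matrix N6 N6 ℂ} (dR : N6 → ℝ) (ε : N6 → ℂ)
    (hPQ : P * Q = 1) (hQP : Q * P = 1)
    (hA : A * P = P * Matrix.diagonal (fun i => (dR i : ℂ)))
    (hI : inversionOp * P = P * Matrix.diagonal ε) :
    nMinus A = Module.finrank ℂ (stdSub {i | dR i < 0 ∧ ε i = -1}) := by
  set d : N6 → ℂ := fun i => (dR i : ℂ) with hd
  set e : (N6 → ℂ) ≃ₗ[ℂ] (N6 → ℂ) := Matrix.toLin'OfInv hQP hPQ with he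
  have hecoe : (e : (N6 → ℂ) →ₗ[ℂ] (N6 → ℂ)) = Matrix.toLin' P := rfl
  have hinj : Function.Injective (Matrix.toLin' P) := by
    rw [← hecoe]; exact e.injective
  have hneg : negSpace A = (stdSub {i | d i ∈ negEigenvalues A}).map (Matrix.toLin' P) := by
    rw [negSpace]
    have h1 : ∀ μ : ℂ, Module.End.eigenspace (Matrix.toLin' A) μ
        = (stdSub {i | d i = μ}).map (Matrix.toLin' P) := fun μ => by
      rw [eigenspace_conj hPQ hQP hA, eigenspace_diag]
    simp_rw [h1, ← Submodule.map_iSup]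
    rw [iSup_stdSub]
  have hinv : Module.End.eigenspace (Matrix.toLin' inversionOp) (-1)
      = (stdSub {i | ε i = -1}).map (Matrix.toLin' P) := by
    rw [eigenspace_conj hPQ hQP hI, eigenspace_diag]
  have hset : {i | d i ∈ negEigenvalues A} ∩ {i | ε i = -1}
      = {i | dR i < 0 ∧ ε i = -1} := by
    have hspec : spectrum ℂ A = Set.range d := spectrum_eq hPQ hQP hA
    ext i
    simp only [Set.mem_inter_iff, Set.mem_setOf_eq, negEigenvalues, hspec]
    constructor
    · rintro ⟨⟨-, x, hx, hxneg⟩, hε⟩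
      have hxd : x = dR i := by
        have hx' : (x : ℂ) = ((dR i : ℝ) : ℂ) := hx
        exact_mod_cast hx'
      exact ⟨by rwa [hxd] at hxneg, hε⟩
    · rintro ⟨hdR, hε⟩
      exact ⟨⟨⟨i, rfl⟩, dR i, rfl, hdR⟩, hε⟩
  rw [nMinus, hneg, hinv, ← Submodule.map_inf _ hinj, stdSub_inf, hset, ← hecoe,
    LinearEquiv.finrank_map_eq]

lemma finrank_stdSub_singleton (i : N6) : Module.finrank ℂ (stdSub {i}) = 1 := by
  have h1 : stdSub {i} = Submodule.span ℂ {Pi.single i (1 : ℂ)} := by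
    apply le_antisymm
    · intro x hx
      rw [Submodule.mem_span_singleton]
      refine ⟨x i, ?_⟩
      funext j
      by_cases h : j = i
      · subst h; simp
      · simp [Pi.single_eq_of_ne h, hx j (by simpa using h)]
    · rw [Submodule.span_le, Set.singleton_subset_iff]
      intro j hj
      exact Pi.single_eq_of_ne (by simpa using hj) 1
  rw [h1]
  refine finrank_span_singleton ?_
  intro h
  have := congrFun h i
  simp at this

def elimLin : (Fin 3 → ℂ) →ₗ[ℂ] (N6 → ℂ) where
  toFun g := Sum.elim 0 g
  map_add' g h := by funext i; cases i <;> simp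
  map_smul' c g := by funext i; cases i <;> simp

lemma range_elimLin :
    LinearMap.range elimLin = stdSub (Set.range (Sum.inr : Fin 3 → N6)) := by
  ext x
  constructor
  · rintro ⟨g, rfl⟩ i hi
    cases i with
    | inl j => rfl
    | inr j => exact absurd ⟨j, rfl⟩ hi
  · intro hx
    refine ⟨fun j => x (Sum.inr j), ?_⟩
    funext i
    cases i with
    | inl j => exact (hx (Sum.inl j) (by simp)).symm
    | inr j => rfl

lemma finrank_stdSub_range_inr :
    Module.finrank ℂ (stdSub (Set.range (Sum.inr : Fin 3 → N6))) = 3 := by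
  rw [← range_elimLin, LinearMap.finrank_range_of_inj, Module.finrank_fin_fun]
  intro g h hgh
  funext j
  exact congrFun hgh (Sum.inr j)

end IndicatorAux

namespace IndicatorAux

lemma nMinus_fromBlocks (h V W : Matrix (Fin 3) (Fin 3) ℂ) (lam : Fin 3 → ℝ)
    (hVW : V * W = 1) (hWV : W * V = 1)
    (hhV : h * V = V * Matrix.diagonal (fun j => (lam j : ℂ))) :
    nMinus (Matrix.fromBlocks 0 h h 0)
      = Module.finrank ℂ (stdSub (Sum.inr '' {j | 0 < lam j})) := by
  set Λ : Matrix (Fin 3) (Fin 3) ℂ := Matrix.diagonal (fun j => (lam j : ℂ)) with hΛ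
  set P : Matrix N6 N6 ℂ := Matrix.fromBlocks V V V (-V) with hP
  set Q : Matrix N6 N6 ℂ := (2⁻¹ : ℂ) • Matrix.fromBlocks W W W (-W) with hQ
  have h2 : ((2⁻¹ : ℂ)) • ((1 : Matrix (Fin 3) (Fin 3) ℂ) + 1) = 1 := by
    rw [← two_smul ℂ (1 : Matrix (Fin 3) (Fin 3) ℂ), smul_smul]
    norm_num
  have hPQ : P * Q = 1 := by
    rw [hP, hQ, mul_smul_comm, Matrix.fromBlocks_multiply]
    simp only [hVW, Matrix.mul_neg, Matrix.neg_mul, neg_neg, add_neg_cancel]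
    simp only [Matrix.fromBlocks_smul, h2, smul_zero, Matrix.fromBlocks_one]
  have hQP : Q * P = 1 := by
    rw [hP, hQ, smul_mul_assoc, Matrix.fromBlocks_multiply]
    simp only [hWV, Matrix.mul_neg, Matrix.neg_mul, neg_neg, add_neg_cancel]
    simp only [Matrix.fromBlocks_smul, h2, smul_zero, Matrix.fromBlocks_one]
  set dR : N6 → ℝ := Sum.elim lam (fun j => -lam j) with hdR
  have hnegΛ : -Λ = Matrix.diagonal (fun j => ((-lam j : ℝ) : ℂ)) := by
    rw [hΛ, Matrix.diagonal_neg]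
    congr 1
    funext j
    push_cast
    ring
  have hdiagA : Matrix.diagonal (fun i => (dR i : ℂ)) = Matrix.fromBlocks Λ 0 0 (-Λ) := by
    rw [hnegΛ, hΛ, Matrix.fromBlocks_diagonal]
    refine congrArg Matrix.diagonal (funext fun i => ?_)
    cases i <;> simp [hdR]
  set ε : N6 → ℂ := Sum.elim (fun _ => (1 : ℂ)) (fun _ => (-1 : ℂ)) with hε
  have hdiagI : Matrix.diagonal ε = Matrix.fromBlocks 1 0 0 (-1) := by
    have hn1 : (-1 : Matrix (Fin 3) (Fin 3) ℂ) = Matrix.diagonal (fun _ => (-1:ℂ)) := by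
      rw [show (-1 : Matrix (Fin 3) (Fin 3) ℂ) = -(Matrix.diagonal fun _ => (1:ℂ)) by
        rw [Matrix.diagonal_one], Matrix.diagonal_neg]
    rw [hn1, show (1 : Matrix (Fin 3) (Fin 3) ℂ) = Matrix.diagonal (fun _ => (1:ℂ)) from
      (Matrix.diagonal_one).symm, Matrix.fromBlocks_diagonal]
  have hA : (Matrix.fromBlocks 0 h h 0) * P = P * Matrix.diagonal (fun i => (dR i : ℂ)) := by
    rw [hdiagA, hP, Matrix.fromBlocks_multiply, Matrix.fromBlocks_multiply]
    simp only [hhV, ← hΛ, Matrix.zero_mul, Matrix.mul_zero, Matrix.mul_neg, Matrix.neg_mul,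
      neg_neg, neg_zero, add_zero, zero_add]
  have hI : inversionOp * P = P * Matrix.diagonal ε := by
    rw [hdiagI, inversionOp, hP, Matrix.fromBlocks_multiply, Matrix.fromBlocks_multiply]
    simp only [Matrix.zero_mul, Matrix.mul_zero, Matrix.mul_one, Matrix.one_mul,
      Matrix.mul_neg, Matrix.neg_mul, neg_neg, neg_zero, add_zero, zero_add]
  have hsets : {i : N6 | dR i < 0 ∧ ε i = -1} = Sum.inr '' {j | 0 < lam j} := by
    ext i
    cases i with
  | inl j =>
    simp only [Set.mem_setOf_eq, hdR, hε, Sum.elim_inl, Set.mem_image]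
    constructor
    · rintro ⟨-, h1⟩
      norm_num at h1
    · rintro ⟨x, -, hx⟩
      exact absurd hx (by simp)
  | inr j =>
    simp only [Set.mem_setOf_eq, hdR, hε, Sum.elim_inr, Set.mem_image, neg_lt_zero]
    constructor
    · rintro ⟨h1, -⟩
      exact ⟨j, h1, rfl⟩

    · rintro ⟨x, hx, hxe⟩
      obtain rfl : x = j := Sum.inr_injective hxe
      exact ⟨hx, by norm_num⟩
  rw [nMinus_eq dR ε hPQ hQP hA hI, hsets]

end IndicatorAux

namespace IndicatorAux

lemma sqrt2_sq : ((Real.sqrt 2 : ℝ) : ℂ) ^ 2 = 2 := by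
  rw [← Complex.ofReal_pow, Real.sq_sqrt (by norm_num : (0:ℝ) ≤ 2)]
  norm_num

lemma sqrt2_pos : (0:ℝ) < Real.sqrt 2 := Real.sqrt_pos.2 (by norm_num)

lemma sqrt2_lt_two : Real.sqrt 2 < 2 := by
  nlinarith [Real.sq_sqrt (by norm_num : (0:ℝ) ≤ 2), Real.sqrt_nonneg 2]

lemma nMinus_11 : nMinus (AFixed 1 1) = 3 := by
  have c2 := sqrt2_sq
  set c : ℂ := ((Real.sqrt 2 : ℝ) : ℂ) with hc
  set lam : Fin 3 → ℝ := ![2, 2 + Real.sqrt 2, 2 - Real.sqrt 2] with hlam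
  set V : Matrix (Fin 3) (Fin 3) ℂ := !![1,0,0; 0,1,1; 0,-1+c,-1-c] with hV
  set W : Matrix (Fin 3) (Fin 3) ℂ := !![1,0,0; 0,(2+c)/4, c/4; 0,(2-c)/4, -(c/4)] with hW
  have h11 : AFixed 1 1
      = Matrix.fromBlocks 0 (!![2,0,0; 0,3,1; 0,1,1]) (!![2,0,0; 0,3,1; 0,1,1]) 0 := by
    have : hOne 1 1 = !![2,0,0; 0,3,1; 0,1,1] := by
      ext i j
      fin_cases i <;> fin_cases j <;> norm_num [hOne]
    rw [AFixed, this]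
  have hVW : V * W = 1 := by
    ext i j
    fin_cases i <;> fin_cases j <;>
      simp [hV, hW, Matrix.mul_apply, Fin.sum_univ_succ, Matrix.one_apply] <;>
      first
      | ring1
      | linear_combination c2 | linear_combination -c2
      | linear_combination c2/2 | linear_combination -(c2/2)
      | linear_combination c2/4 | linear_combination -(c2/4)
  have hWV : W * V = 1 := by
    ext i j
    fin_cases i <;> fin_cases j <;>
      simp [hV, hW, Matrix.mul_apply, Fin.sum_univ_succ, Matrix.one_apply] <;>
      first
      | ring1
      | linear_combination c2 | linear_combination -c2
      | linear_combination c2/2 | linear_combination -(c2/2)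
      | linear_combination c2/4 | linear_combination -(c2/4)
  have hhV : !![(2:ℂ),0,0; 0,3,1; 0,1,1] * V = V * Matrix.diagonal (fun j => (lam j : ℂ)) := by
    ext i j
    fin_cases i <;> fin_cases j <;>
      simp [hV, hlam, Matrix.mul_apply, Fin.sum_univ_succ, Matrix.diagonal_apply] <;>
      push_cast <;>
      first
      | ring1
      | linear_combination c2 | linear_combination -c2
      | linear_combination c2/2 | linear_combination -(c2/2)
      | linear_combination c2/4 | linear_combination -(c2/4)
  have hset : {j : Fin 3 | 0 < lam j} = Set.univ := by
    ext j
    simp only [Set.mem_setOf_eq, Set.mem_univ, iff_true]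
    fin_cases j
    · norm_num [hlam]
    · norm_num [hlam]
      nlinarith [sqrt2_pos]
    · norm_num [hlam]
  rw [h11, nMinus_fromBlocks _ V W lam hVW hWV hhV, hset, Set.image_univ,
    finrank_stdSub_range_inr]

end IndicatorAux

namespace IndicatorAux

lemma sqrt3_sq : ((Real.sqrt 3 : ℝ) : ℂ) ^ 2 = 3 := by
  rw [← Complex.ofReal_pow, Real.sq_sqrt (by norm_num : (0:ℝ) ≤ 3)]
  norm_num

lemma one_lt_sqrt3 : 1 < Real.sqrt 3 := by
  nlinarith [Real.sq_sqrt (by norm_num : (0:ℝ) ≤ 3), Real.sqrt_nonneg 3]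

lemma nMinus_1m1 : nMinus (AFixed 1 (-1)) = 1 := by
  have c2 := sqrt2_sq
  set c : ℂ := ((Real.sqrt 2 : ℝ) : ℂ) with hc
  set lam : Fin 3 → ℝ := ![-2, Real.sqrt 2, -Real.sqrt 2] with hlam
  set V : Matrix (Fin 3) (Fin 3) ℂ := !![1,0,0; 0,1,1; 0,1+c,1-c] with hV
  set W : Matrix (Fin 3) (Fin 3) ℂ := !![1,0,0; 0,(2-c)/4, c/4; 0,(2+c)/4, -(c/4)] with hW
  have h11 : AFixed 1 (-1)
      = Matrix.fromBlocks 0 (!![-2,0,0; 0,-1,1; 0,1,1]) (!![-2,0,0; 0,-1,1; 0,1,1]) 0 := by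
    have : hOne 1 (-1) = !![-2,0,0; 0,-1,1; 0,1,1] := by
      ext i j
      fin_cases i <;> fin_cases j <;> norm_num [hOne]
    rw [AFixed, this]
  have hVW : V * W = 1 := by
    ext i j
    fin_cases i <;> fin_cases j <;>
      simp [hV, hW, Matrix.mul_apply, Fin.sum_univ_succ, Matrix.one_apply] <;>
      first
      | ring1
      | linear_combination c2 | linear_combination -c2
      | linear_combination c2/2 | linear_combination -(c2/2)
      | linear_combination c2/4 | linear_combination -(c2/4)
  have hWV : W * V = 1 := by
    ext i j
    fin_cases i <;> fin_cases j <;>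
      simp [hV, hW, Matrix.mul_apply, Fin.sum_univ_succ, Matrix.one_apply] <;>
      first
      | ring1
      | linear_combination c2 | linear_combination -c2
      | linear_combination c2/2 | linear_combination -(c2/2)
      | linear_combination c2/4 | linear_combination -(c2/4)
  have hhV : !![(-2:ℂ),0,0; 0,-1,1; 0,1,1] * V = V * Matrix.diagonal (fun j => (lam j : ℂ)) := by
    ext i j
    fin_cases i <;> fin_cases j <;>
      simp [hV, hlam, Matrix.mul_apply, Fin.sum_univ_succ, Matrix.diagonal_apply] <;>
      push_cast <;>
      first
      | ring1
      | linear_combination c2 | linear_combination -c2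
      | linear_combination c2/2 | linear_combination -(c2/2)
      | linear_combination c2/4 | linear_combination -(c2/4)
  have hset : {j : Fin 3 | 0 < lam j} = {1} := by
    ext j
    fin_cases j <;> simp [hlam, sqrt2_pos]
  rw [h11, nMinus_fromBlocks _ V W lam hVW hWV hhV, hset, Set.image_singleton,
    finrank_stdSub_singleton]

lemma nMinus_m1 (w : ℂ) (hw : w = 1 ∨ w = -1) : nMinus (AFixed (-1) w) = 1 := by
  have c2 := sqrt3_sq
  set c : ℂ := ((Real.sqrt 3 : ℝ) : ℂ) with hc
  set lam : Fin 3 → ℝ := ![-2, 1 + Real.sqrt 3, 1 - Real.sqrt 3] with hlam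
  set V : Matrix (Fin 3) (Fin 3) ℂ :=
    !![1, 4+2*c, 4-2*c; 1, -5-3*c, -5+3*c; -1, -1-c, -1+c] with hV
  set W : Matrix (Fin 3) (Fin 3) ℂ :=
    !![1/3, 1/3, -(1/3); 1/3-c/6, 1/12-c/12, 5/12-c/4; 1/3+c/6, 1/12+c/12, 5/12+c/4] with hW
  have h11 : AFixed (-1) w
      = Matrix.fromBlocks 0 (!![0,-2,0; -2,1,1; 0,1,-1]) (!![0,-2,0; -2,1,1; 0,1,-1]) 0 := by
    have : hOne (-1) w = !![0,-2,0; -2,1,1; 0,1,-1] := by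
      rcases hw with rfl | rfl <;>
      · ext i j
        fin_cases i <;> fin_cases j <;> norm_num [hOne]
    rw [AFixed, this]
  have hVW : V * W = 1 := by
    ext i j
    fin_cases i <;> fin_cases j <;>
      simp [hV, hW, Matrix.mul_apply, Fin.sum_univ_succ, Matrix.one_apply] <;>
      first
      | ring1
      | linear_combination c2 | linear_combination -c2
      | linear_combination c2/2 | linear_combination -(c2/2)
      | linear_combination c2/3 | linear_combination -(c2/3)
      | linear_combination c2/6 | linear_combination -(c2/6)
      | linear_combination 2*c2/3 | linear_combination -(2*c2/3)
      | linear_combination 3*c2/2 | linear_combination -(3*c2/2)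
      | linear_combination 2*c2 | linear_combination -(2*c2)
      | linear_combination 3*c2 | linear_combination -(3*c2)
      | linear_combination c2/4 | linear_combination -(c2/4)
      | linear_combination c2/12 | linear_combination -(c2/12)
  have hWV : W * V = 1 := by
    ext i j
    fin_cases i <;> fin_cases j <;>
      simp [hV, hW, Matrix.mul_apply, Fin.sum_univ_succ, Matrix.one_apply] <;>
      first
      | ring1
      | linear_combination c2 | linear_combination -c2
      | linear_combination c2/2 | linear_combination -(c2/2)
      | linear_combination c2/3 | linear_combination -(c2/3)
      | linear_combination c2/6 | linear_combination -(c2/6)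
      | linear_combination 2*c2/3 | linear_combination -(2*c2/3)
      | linear_combination 3*c2/2 | linear_combination -(3*c2/2)
      | linear_combination 2*c2 | linear_combination -(2*c2)
      | linear_combination 3*c2 | linear_combination -(3*c2)
      | linear_combination c2/4 | linear_combination -(c2/4)
      | linear_combination c2/12 | linear_combination -(c2/12)
  have hhV : !![(0:ℂ),-2,0; -2,1,1; 0,1,-1] * V
      = V * Matrix.diagonal (fun j => (lam j : ℂ)) := by
    ext i j
    fin_cases i <;> fin_cases j <;>
      simp [hV, hlam, Matrix.mul_apply, Fin.sum_univ_succ, Matrix.diagonal_apply] <;>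
      push_cast <;>
      first
      | ring1
      | linear_combination c2 | linear_combination -c2
      | linear_combination c2/2 | linear_combination -(c2/2)
      | linear_combination c2/3 | linear_combination -(c2/3)
      | linear_combination c2/6 | linear_combination -(c2/6)
      | linear_combination 2*c2 | linear_combination -(2*c2)
      | linear_combination 3*c2 | linear_combination -(3*c2)
  have hset : {j : Fin 3 | 0 < lam j} = {1} := by
    have h2 : ¬ (Real.sqrt 3 < 1) := not_lt.2 one_lt_sqrt3.le
    have h3 : (0:ℝ) < 1 + Real.sqrt 3 := by positivity
    ext j
    fin_cases j <;> simp [hlam, h2, h3, sub_pos]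
  rw [h11, nMinus_fromBlocks _ V W lam hVW hWV hhV, hset, Set.image_singleton,
    finrank_stdSub_singleton]

end IndicatorAux

/-- The values of `n₋` at the four inversion-fixed points of the torus: `n₋(1,1) = 3` and
`n₋(−1,1) = n₋(1,−1) = n₋(−1,−1) = 1`, so their sum is `6` and the symmetry-based indicator
`μ₂D(H₁) = −Σ n₋(Γ) mod 4` equals `2`. -/
theorem symmetry_based_indicator_of_deformed_Hamiltonian :
    nMinus (AFixed 1 1) = 3 ∧
    nMinus (AFixed (-1) 1) = 1 ∧
    nMinus (AFixed 1 (-1)) = 1 ∧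
    nMinus (AFixed (-1) (-1)) = 1 ∧
    nMinus (AFixed 1 1) + nMinus (AFixed (-1) 1) + nMinus (AFixed 1 (-1)) +
      nMinus (AFixed (-1) (-1)) = 6 ∧
    -((nMinus (AFixed 1 1) + nMinus (AFixed (-1) 1) + nMinus (AFixed 1 (-1)) +
      nMinus (AFixed (-1) (-1)) : ZMod 4)) = 2 := by
  have h1 := IndicatorAux.nMinus_11
  have h2 := IndicatorAux.nMinus_m1 1 (Or.inl rfl)
  have h3 := IndicatorAux.nMinus_1m1
  have h4 := IndicatorAux.nMinus_m1 (-1) (Or.inr rfl)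
  refine ⟨h1, h2, h3, h4, by rw [h1, h2, h3, h4], ?_⟩
  rw [h1, h2, h3, h4]
  decide
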